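/- For every odd integer n ≥ 3, there exists a sequence l_1, l_2, …, l_{n−1} of elements of ZMod n that enumerates every nonzero element of ZMod n exactly once, such that the partial sums s_0 = 0 and s_t = l_1 + l_2 + ⋯ + l_t for 1 ≤ t ≤ n−2 are pairwise distinct in ZMod n, and s_{n−1} = l_1 + ⋯ + l_{n−1} = 0. (Equivalently, K*_n contains a near-Hamiltonian cycle whose n−1 edges have pairwise distinct lengths.) -/

import Mathlib

/-- Partial-sum pattern: `f n (2i) = i`, `f n (2i+1) = n-1-i` for `i < ⌊m/2⌋`
and `n-2-i` otherwise, where `m = (n-1)/2`. -/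
def nearHamF (n t : ℕ) : ℕ :=
  if t % 2 = 0 then t / 2
  else if t / 2 < (n - 1) / 2 / 2 then n - 1 - t / 2 else n - 2 - t / 2

/-- The corresponding edge lengths. -/
def nearHamG (n t : ℕ) : ℕ :=
  if t % 2 = 0 then
    (if t / 2 < (n - 1) / 2 / 2 then n - 1 - 2 * (t / 2) else n - 2 - 2 * (t / 2))
  else if t = n - 2 then (n - 1) / 2 + 1
  else if t / 2 < (n - 1) / 2 / 2 then 2 * (t / 2) + 2 else 2 * (t / 2) + 3

/-- For every odd `n ≥ 3` there is a sequence `l 0, …, l (n-2)` of edge lengths (elements of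
`ZMod n`) enumerating every nonzero element of `ZMod n` exactly once, whose partial sums
`s_t = l 0 + ⋯ + l (t-1)` for `0 ≤ t ≤ n-2` are pairwise distinct and whose total sum is `0`.
(Equivalently, `K*_n` contains a near-Hamiltonian cycle with pairwise distinct edge lengths.) -/
theorem nearHam_cycle_distinct_lengths_of_odd (n : ℕ) (hn3 : 3 ≤ n) (hodd : Odd n) :
    ∃ l : ℕ → ZMod n,
      -- the lengths enumerate every nonzero element of `ZMod n` exactly once
      (∀ x : ZMod n, x ≠ 0 → ∃! t : Fin (n - 1), l (t : ℕ) = x) ∧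
      -- the partial sums s_0, …, s_{n-2} are pairwise distinct
      (∀ t₁ t₂, t₁ ≤ n - 2 → t₂ ≤ n - 2 →
        (∑ i ∈ Finset.range t₁, l i) = (∑ i ∈ Finset.range t₂, l i) → t₁ = t₂) ∧
      -- s_{n-1} = 0
      (∑ i ∈ Finset.range (n - 1), l i) = 0 := by
  haveI : NeZero n := ⟨by omega⟩
  obtain ⟨m, hm⟩ := hodd
  -- basic facts about the pattern, all by case analysis and linear arithmetic
  have hgb : ∀ t, t ≤ n - 2 → 1 ≤ nearHamG n t ∧ nearHamG n t ≤ n - 1 := by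
    intro t ht
    simp only [nearHamG]
    split_ifs <;> omega
  have hginj : ∀ t₁ t₂, t₁ ≤ n - 2 → t₂ ≤ n - 2 →
      nearHamG n t₁ = nearHamG n t₂ → t₁ = t₂ := by
    intro t₁ t₂ h₁ h₂
    simp only [nearHamG]
    split_ifs <;> omega
  have hfb : ∀ t, t ≤ n - 2 → nearHamF n t < n := by
    intro t ht
    simp only [nearHamF]
    split_ifs <;> omega
  have hfinj : ∀ t₁ t₂, t₁ ≤ n - 2 → t₂ ≤ n - 2 →
      nearHamF n t₁ = nearHamF n t₂ → t₁ = t₂ := by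
    intro t₁ t₂ h₁ h₂
    simp only [nearHamF]
    split_ifs <;> omega
  have hstep : ∀ t, t + 1 ≤ n - 2 →
      nearHamF n t + nearHamG n t = nearHamF n (t + 1) ∨
      nearHamF n t + nearHamG n t = nearHamF n (t + 1) + n := by
    intro t ht
    simp only [nearHamF, nearHamG]
    split_ifs <;> omega
  have hlast : nearHamF n (n - 2) + nearHamG n (n - 2) = n := by
    simp only [nearHamF, nearHamG]
    split_ifs <;> omega
  set l : ℕ → ZMod n := fun t => ((nearHamG n t : ℕ) : ZMod n) with hl
  -- partial sums are given by `nearHamF`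
  have Psum : ∀ t, t ≤ n - 2 → (∑ i ∈ Finset.range t, l i) = ((nearHamF n t : ℕ) : ZMod n) := by
    intro t
    induction t with
    | zero => intro _; simp [nearHamF]
    | succ t ih =>
      intro ht
      rw [Finset.sum_range_succ, ih (by omega)]
      have key : ((nearHamF n t + nearHamG n t : ℕ) : ZMod n)
          = ((nearHamF n (t + 1) : ℕ) : ZMod n) := by
        rcases hstep t ht with h | h
        · rw [h]
        · rw [h]; push_cast [ZMod.natCast_self]; ring
      push_cast at key ⊢
      rw [key]
  refine ⟨l, ?_, ?_, ?_⟩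
  · -- the lengths enumerate all nonzero residues
    have hne : ∀ t : ℕ, t ≤ n - 2 → l t ≠ 0 := by
      intro t ht h0
      have b := hgb t ht
      have hv : (l t).val = nearHamG n t := ZMod.val_cast_of_lt (by omega)
      rw [h0, ZMod.val_zero] at hv
      omega
    have hlinj : Function.Injective (fun t : Fin (n - 1) => l (t : ℕ)) := by
      intro t₁ t₂ h
      have h₁ : (t₁ : ℕ) ≤ n - 2 := by have := t₁.isLt; omega
      have h₂ : (t₂ : ℕ) ≤ n - 2 := by have := t₂.isLt; omega
      have hv := congrArg ZMod.val h
      rw [ZMod.val_cast_of_lt (by have := hgb _ h₁; omega),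
          ZMod.val_cast_of_lt (by have := hgb _ h₂; omega)] at hv
      exact Fin.ext (hginj _ _ h₁ h₂ hv)
    have himg : Finset.image (fun t : Fin (n - 1) => l (t : ℕ)) Finset.univ
        = (Finset.univ : Finset (ZMod n)).erase 0 := by
      apply Finset.eq_of_subset_of_card_le
      · intro x hx
        simp only [Finset.mem_image] at hx
        obtain ⟨t, _, rfl⟩ := hx
        exact Finset.mem_erase.mpr ⟨hne t (by have := t.isLt; omega), Finset.mem_univ _⟩
      · rw [Finset.card_erase_of_mem (Finset.mem_univ _), Finset.card_univ,
          ZMod.card, Finset.card_image_of_injective _ hlinj, Finset.card_univ,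
          Fintype.card_fin]
    intro x hx
    have hx' : x ∈ Finset.image (fun t : Fin (n - 1) => l (t : ℕ)) Finset.univ := by
      rw [himg]; exact Finset.mem_erase.mpr ⟨hx, Finset.mem_univ _⟩
    obtain ⟨t, _, ht⟩ := Finset.mem_image.mp hx'
    exact ⟨t, ht, fun t' ht' => hlinj (ht'.trans ht.symm)⟩
  · -- partial sums distinct
    intro t₁ t₂ h₁ h₂ heq
    rw [Psum t₁ h₁, Psum t₂ h₂] at heq
    have := congrArg ZMod.val heq
    rw [ZMod.val_cast_of_lt (hfb t₁ h₁), ZMod.val_cast_of_lt (hfb t₂ h₂)] at this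
    exact hfinj t₁ t₂ h₁ h₂ this
  · -- total sum is zero
    have h1 : n - 1 = (n - 2) + 1 := by omega
    rw [h1, Finset.sum_range_succ, Psum (n - 2) le_rfl]
    have : ((nearHamF n (n - 2) + nearHamG n (n - 2) : ℕ) : ZMod n) = 0 := by
      rw [hlast]; exact ZMod.natCast_self n
    push_cast at this ⊢
    linear_combination this
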